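/- Let Y be a finite nonempty set, E : Y → ℝ, RT > 0. Let M be a finite nonempty set with energy E_m : M → ℝ and R a finite nonempty set with energy E_r : R → ℝ, let C ⊆ Y and φ : C ≃ M × R a bijection with E(φ⁻¹(m, r)) = c + E_m(m) + E_r(r) for some constant c. If y⋆ ∈ C with φ(y⋆) = (m⋆, r⋆), then the Boltzmann probability of y⋆ in Y satisfies p(y⋆) ≤ p_M(m⋆), where p_M(m⋆) = exp(−E_m(m⋆)/RT)/Σ_{m∈M} exp(−E_m(m)/RT). -/

import Mathlib

/-- Single-motif bound (CountingDesign): if the structures containing the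
motif's boundary pairs form a set `C` in bijection with pairs (motif
conformation, remainder conformation), with additive energy (up to a constant),
then the Boltzmann probability of the target structure is at most the
motif-level Boltzmann probability of its motif conformation. -/
theorem boltzmann_single_motif_bound {Y M R : Type*}
    [Fintype Y] [Nonempty Y] [Fintype M] [Nonempty M] [Fintype R] [Nonempty R]
    (E : Y → ℝ) (Em : M → ℝ) (Er : R → ℝ) (RT : ℝ) (hRT : 0 < RT)
    (C : Set Y) (φ : C ≃ M × R) (c : ℝ)
    (hE : ∀ mr : M × R, E (φ.symm mr : Y) = c + Em mr.1 + Er mr.2)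
    (ystar : Y) (hy : ystar ∈ C) (mstar : M) (rstar : R)
    (hφ : φ ⟨ystar, hy⟩ = (mstar, rstar)) :
    Real.exp (-E ystar / RT) / ∑ z, Real.exp (-E z / RT) ≤
      Real.exp (-Em mstar / RT) / ∑ m, Real.exp (-Em m / RT) := by
  classical
  set A := Real.exp (-c / RT) with hA
  set a := Real.exp (-Em mstar / RT) with ha
  set b := Real.exp (-Er rstar / RT) with hb
  set SM := ∑ m, Real.exp (-Em m / RT) with hSM
  set SR := ∑ r, Real.exp (-Er r / RT) with hSR
  set SY := ∑ z, Real.exp (-E z / RT) with hSY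
  have hApos : 0 < A := Real.exp_pos _
  have hapos : 0 < a := Real.exp_pos _
  have hbpos : 0 < b := Real.exp_pos _
  have hSMpos : 0 < SM := Finset.sum_pos (fun m _ => Real.exp_pos _) Finset.univ_nonempty
  have hSRpos : 0 < SR := Finset.sum_pos (fun r _ => Real.exp_pos _) Finset.univ_nonempty
  have hSYpos : 0 < SY := Finset.sum_pos (fun z _ => Real.exp_pos _) Finset.univ_nonempty
  haveI : Fintype C := Fintype.ofEquiv _ φ.symm
  -- the target energy factorizes
  have hystar : (φ.symm (mstar, rstar) : Y) = ystar := by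
    rw [← hφ, Equiv.symm_apply_apply]
  have hEystar : Real.exp (-E ystar / RT) = A * a * b := by
    rw [← hystar, hE]
    rw [hA, ha, hb, ← Real.exp_add, ← Real.exp_add]
    ring_nf
  -- the sum over C factorizes
  have hCsum : ∑ y : C, Real.exp (-E (y : Y) / RT) = A * SM * SR := by
    rw [← Equiv.sum_comp φ.symm (fun y : C => Real.exp (-E (y : Y) / RT))]
    have : ∀ mr : M × R, Real.exp (-E (φ.symm mr : Y) / RT)
        = A * Real.exp (-Em mr.1 / RT) * Real.exp (-Er mr.2 / RT) := by
      intro mr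
      rw [hE, hA, ← Real.exp_add, ← Real.exp_add]
      ring_nf
    simp_rw [this]
    rw [Fintype.sum_prod_type]
    simp_rw [mul_assoc, ← Finset.mul_sum, ← Finset.sum_mul]
    rfl
  -- the sum over C is at most SY
  have hCle : ∑ y : C, Real.exp (-E (y : Y) / RT) ≤ SY := by
    rw [hSY, Finset.sum_set_coe (f := fun y => Real.exp (-E y / RT)) C]
    exact Finset.sum_le_sum_of_subset_of_nonneg (Finset.subset_univ _)
      (fun i _ _ => (Real.exp_pos _).le)
  have hASMSR : A * SM * SR ≤ SY := hCsum ▸ hCle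
  have hble : b ≤ SR := by
    exact Finset.single_le_sum (f := fun r => Real.exp (-Er r / RT))
      (fun r _ => (Real.exp_pos _).le) (Finset.mem_univ rstar)
  rw [hEystar]
  calc A * a * b / SY ≤ A * a * b / (A * SM * SR) := by
        gcongr
    _ = a * (b / SR) / SM := by field_simp
    _ ≤ a * 1 / SM := by
        gcongr
        · exact div_le_one_of_le₀ hble hSRpos.le
    _ = a / SM := by ring
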